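/- With η̌ = multiplication by Σ_{r=1}^m θ_r ϑ_r in the exterior algebra on θ_1,...,θ_m,ϑ_1,...,ϑ_m, for integers 0 ≤ r < s ≤ m+1 one has η̌^{s−r}(θ⃗_r ϑ⃗_s) = 0, where θ⃗_r = θ_1⋯θ_r and ϑ⃗_s = ϑ_m⋯ϑ_s. -/

import Mathlib

noncomputable section

section auxExterior
variable {R M : Type*} [CommRing R] [AddCommGroup M] [Module R M]
open ExteriorAlgebra

lemma ι_anticomm' (a b : M) : ι R a * ι R b = - (ι R b * ι R a) :=
  eq_neg_of_add_eq_zero_left (ι_add_mul_swap a b)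

lemma swap3' (a b : M) (y : ExteriorAlgebra R M) :
    ι R a * (ι R b * y) = -(ι R b * (ι R a * y)) := by
  rw [← mul_assoc, ι_anticomm', neg_mul, mul_assoc]

lemma ι_mul_list' (l : List M) (v : M) (hv : v ∈ l) :
    ι R v * (l.map (ι R)).prod = 0 := by
  induction l with
  | nil => simp at hv
  | cons a t ih =>
    rw [List.map_cons, List.prod_cons]
    rcases List.mem_cons.mp hv with h | h
    · rw [h, ← mul_assoc, ι_sq_zero, zero_mul]
    · rw [swap3', ih h, mul_zero, neg_zero]

lemma ι_mul_list_app' (l : List M) (v : M) (hv : v ∈ l) (y : ExteriorAlgebra R M) :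
    ι R v * ((l.map (ι R)).prod * y) = 0 := by
  rw [← mul_assoc, ι_mul_list' l v hv, zero_mul]

lemma ι_comm_list' (l : List M) (v : M) (y : ExteriorAlgebra R M) :
    ι R v * ((l.map (ι R)).prod * y) =
      ((-1 : R) ^ l.length) • ((l.map (ι R)).prod * (ι R v * y)) := by
  induction l generalizing y with
  | nil => simp
  | cons a t ih =>
    rw [List.map_cons, List.prod_cons, mul_assoc, swap3', ih, mul_assoc,
      mul_smul_comm]
    simp [pow_succ, mul_smul]

lemma sq4' (a b : M) (y : ExteriorAlgebra R M) :
    ι R a * (ι R b * (ι R a * (ι R b * y))) = 0 := by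
  rw [swap3' b a, ← mul_assoc (ι R b), ι_sq_zero]
  simp

lemma comm4' (a b c d : M) (y : ExteriorAlgebra R M) :
    ι R a * (ι R b * (ι R c * (ι R d * y))) =
      ι R c * (ι R d * (ι R a * (ι R b * y))) := by
  rw [swap3' b c, swap3' b d]
  simp only [mul_neg, neg_neg]
  rw [swap3' a c, swap3' a d]
  simp

end auxExterior

/-- Exterior algebra on θ_1,...,θ_m,ϑ_1,...,ϑ_m -/
abbrev ExtA (m : ℕ) := ExteriorAlgebra ℂ ((Fin m ⊕ Fin m) → ℂ)

variable (m : ℕ)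

def θv (r : Fin m) : ExtA m := ExteriorAlgebra.ι ℂ (Pi.single (Sum.inl r) 1)
def ϑv (r : Fin m) : ExtA m := ExteriorAlgebra.ι ℂ (Pi.single (Sum.inr r) 1)

/-- the odd superderivation ∂_{θ_r} (left contraction with the dual vector) -/
def dθ (r : Fin m) : Module.End ℂ (ExtA m) :=
  CliffordAlgebra.contractLeft (Q := (0 : QuadraticForm ℂ ((Fin m ⊕ Fin m) → ℂ)))
    (LinearMap.proj (Sum.inl r))
/-- the odd superderivation ∂_{ϑ_r} -/
def dϑ (r : Fin m) : Module.End ℂ (ExtA m) :=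
  CliffordAlgebra.contractLeft (Q := (0 : QuadraticForm ℂ ((Fin m ⊕ Fin m) → ℂ)))
    (LinearMap.proj (Sum.inr r))

/-- Δ̌ = Σ_r ∂_{θ_r}∂_{ϑ_r} -/
def Δc : Module.End ℂ (ExtA m) := ∑ r : Fin m, dθ m r ∘ₗ dϑ m r
/-- η̌ = multiplication by Σ_r θ_r ϑ_r -/
def ηc : Module.End ℂ (ExtA m) := LinearMap.mulLeft ℂ (∑ r : Fin m, θv m r * ϑv m r)

/-- θ⃗_r = θ_1⋯θ_r (the product of the first r generators θ) -/
def θvec (r : ℕ) : ExtA m := (((List.finRange m).take r).map (θv m)).prod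
/-- ϑ⃗_s = ϑ_m ϑ_{m−1}⋯ϑ_s (descending product; equals 1 when s = m+1) -/
def ϑvec (s : ℕ) : ExtA m := ((((List.finRange m).drop (s - 1)).reverse).map (ϑv m)).prod

/-- applied-form versions of the exterior algebra identities -/
lemma θϑ_sq (j : Fin m) (x : ExtA m) :
    θv m j * (ϑv m j * (θv m j * (ϑv m j * x))) = 0 := sq4' _ _ _

lemma θϑ_comm (i j : Fin m) (x : ExtA m) :
    θv m i * (ϑv m i * (θv m j * (ϑv m j * x))) =
      θv m j * (ϑv m j * (θv m i * (ϑv m i * x))) := comm4' _ _ _ _ _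

/-- the key nilpotence lemma: if `η_j x = 0` for all `j` in `B` and the complement of `B`
has fewer than `k` elements, then `η̌^k x = 0`. -/
lemma key_nilpotence (k : ℕ) (B : Finset (Fin m)) (x : ExtA m)
    (hB : ∀ j ∈ B, θv m j * (ϑv m j * x) = 0) (hcard : Bᶜ.card < k) :
    (ηc m ^ k) x = 0 := by
  induction k generalizing B x with
  | zero => omega
  | succ k ih =>
    rw [pow_succ, Module.End.mul_apply]
    have hη : ηc m x = ∑ j ∈ Bᶜ, θv m j * (ϑv m j * x) := by
      have h0 : ∑ j ∈ B, θv m j * ϑv m j * x = 0 :=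
        Finset.sum_eq_zero (fun j hj => by rw [mul_assoc]; exact hB j hj)
      rw [ηc, LinearMap.mulLeft_apply, Finset.sum_mul,
        ← Finset.sum_compl_add_sum B (fun j => θv m j * ϑv m j * x), h0, add_zero]
      exact Finset.sum_congr rfl fun j _ => mul_assoc _ _ _
    rw [hη, map_sum]
    refine Finset.sum_eq_zero fun j hj => ?_
    refine ih (insert j B) _ ?_ ?_
    · intro i hi
      rcases Finset.mem_insert.mp hi with rfl | hi
      · exact θϑ_sq m i x
      · rw [θϑ_comm, hB i hi, mul_zero, mul_zero]
    · rw [Finset.compl_insert, Finset.card_erase_of_mem hj]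
      have : 0 < Bᶜ.card := Finset.card_pos.mpr ⟨j, hj⟩
      omega

lemma mem_take_finRange (r : ℕ) (j : Fin m) (h : (j : ℕ) < r) :
    j ∈ (List.finRange m).take r := by
  rw [List.mem_iff_getElem]
  refine ⟨j.val, by simp [List.length_take]; omega, ?_⟩
  simp [List.getElem_take, List.getElem_finRange]

lemma mem_drop_finRange (d : ℕ) (j : Fin m) (h : d ≤ (j : ℕ)) :
    j ∈ ((List.finRange m).drop d).reverse := by
  rw [List.mem_reverse, List.mem_iff_getElem]
  refine ⟨j.val - d, by simp [List.length_drop]; omega, ?_⟩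
  simp only [List.getElem_drop, List.getElem_finRange]
  exact Fin.ext (by simp; omega)

lemma θvec_eq (r : ℕ) : θvec m r = ((((List.finRange m).take r).map
    (fun i => (Pi.single (Sum.inl i) 1 : (Fin m ⊕ Fin m) → ℂ))).map (ExteriorAlgebra.ι ℂ)).prod := by
  rw [θvec, List.map_map]; rfl

lemma ϑvec_eq (s : ℕ) : ϑvec m s = (((((List.finRange m).drop (s - 1)).reverse).map
    (fun i => (Pi.single (Sum.inr i) 1 : (Fin m ⊕ Fin m) → ℂ))).map (ExteriorAlgebra.ι ℂ)).prod := by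
  rw [ϑvec, List.map_map]; rfl

theorem eta_pow_annihilates (r s : ℕ) (hrs : r < s) (hs : s ≤ m + 1) :
    (ηc m ^ (s - r)) (θvec m r * ϑvec m s) = 0 := by
  classical
  set B : Finset (Fin m) :=
    Finset.univ.filter (fun j => (j : ℕ) < r ∨ s - 1 ≤ (j : ℕ)) with hBdef
  apply key_nilpotence m (s - r) B
  · intro j hj
    have hj' : (j : ℕ) < r ∨ s - 1 ≤ (j : ℕ) := by
      simpa [hBdef] using hj
    rcases hj' with h | h
    · -- θ_j occurs in θvec, kill via anticommuting θ_j past ϑ_j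
      have hmem : (Pi.single (Sum.inl j) 1 : (Fin m ⊕ Fin m) → ℂ) ∈
          ((List.finRange m).take r).map
            (fun i => (Pi.single (Sum.inl i) 1 : (Fin m ⊕ Fin m) → ℂ)) :=
        List.mem_map_of_mem (mem_take_finRange m r j h)
      rw [θv, ϑv, θvec_eq, swap3', ι_mul_list_app' _ _ hmem, mul_zero, neg_zero]
    · -- ϑ_j occurs in ϑvec
      have hmem : (Pi.single (Sum.inr j) 1 : (Fin m ⊕ Fin m) → ℂ) ∈
          (((List.finRange m).drop (s - 1)).reverse).map
            (fun i => (Pi.single (Sum.inr i) 1 : (Fin m ⊕ Fin m) → ℂ)) :=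
        List.mem_map_of_mem (mem_drop_finRange m (s - 1) j h)
      rw [θv, ϑv, θvec_eq, ϑvec_eq, ι_comm_list', ι_mul_list' _ _ hmem,
        mul_zero, smul_zero, mul_zero]
  · have hsub : ∀ j ∈ Bᶜ, (j : ℕ) ∈ Finset.Ico r (s - 1) := by
      intro j hj
      simp only [hBdef, Finset.mem_compl, Finset.mem_filter, Finset.mem_univ,
        true_and, not_or, not_lt, not_le] at hj
      simp only [Finset.mem_Ico]
      omega
    have := Finset.card_le_card_of_injOn (fun j : Fin m => (j : ℕ)) hsub
      (Fin.val_injective.injOn)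
    rw [Nat.card_Ico] at this
    omega
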